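/- Gluing lemma for partition-type maps: suppose given γ : [c] → 2^[c'], β : [b] → 2^[b'], both partition-type, and cofibration-type maps φ : [a] → 2^[b], ψ : [a'] → 2^[b'] (induced by injections), with α : [a] → 2^[a'] such that β ∘ φ = ψ ∘ α. Then the map μ : [c] ⊔ ([b] \ im φ) → 2^{[c'] ⊔ ([b'] \ im ψ)} given by μ(i) = γ(i) for i ∈ [c] and μ(j) = β(j) for j ∈ [b] \ im φ is partition-type, i.e., its values are pairwise disjoint and cover [c'] ⊔ ([b'] \ im ψ). (Here one uses that α is partition-type as well.) -/
import Mathlib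


open Classical in
/-- Composition of set-valued functions: `(ψφ)(x) = ⋃_{y ∈ φ(x)} ψ(y)`. -/
noncomputable def scomp {α β γ : Type*} (ψ : β → Finset γ) (φ : α → Finset β) :
    α → Finset γ :=
  fun x => (φ x).biUnion ψ

/-- Partition-type: values pairwise disjoint and covering the codomain. -/
def PartitionTypeG {α β : Type*} (φ : α → Finset β) : Prop :=
  (∀ x y, x ≠ y → Disjoint (φ x) (φ y)) ∧ ∀ z, ∃ x, z ∈ φ x

open Classical in
/-- The gluing map `μ : [c] ⊔ ([b] \ im φ) → 2^{[c'] ⊔ ([b'] \ im ψ)}`,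
given by `γ` on `[c]` and by (the corestriction of) `β` on `[b] \ im φ`. -/
noncomputable def glueμ {a a' b b' c c' : ℕ} (u : Fin a → Fin b) (u' : Fin a' → Fin b')
    (γ : Fin c → Finset (Fin c')) (β : Fin b → Finset (Fin b')) :
    (Fin c ⊕ {j : Fin b // ¬ ∃ i, u i = j}) →
      Finset (Fin c' ⊕ {j' : Fin b' // ¬ ∃ i', u' i' = j'})
  | Sum.inl i => (γ i).image Sum.inl
  | Sum.inr j => ((β j.1).subtype (fun y => ¬ ∃ i', u' i' = y)).image Sum.inr

/-- gluing lemma for partition-type maps.  Given partition-type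
`γ : [c] → 2^[c']` and `β : [b] → 2^[b']`, cofibration-type maps induced by injections
`u : [a] ↪ [b]` and `u' : [a'] ↪ [b']`, and a partition-type `α : [a] → 2^[a']` with
`β ∘ φ = ψ ∘ α`, the induced map `μ` on the pushout indexing sets is partition-type,
i.e. its values are pairwise disjoint and cover `[c'] ⊔ ([b'] \ im ψ)`. -/
theorem glue_partitionType {a a' b b' c c' : ℕ}
    (u : Fin a → Fin b) (u' : Fin a' → Fin b')
    (hu : Function.Injective u) (hu' : Function.Injective u')
    (γ : Fin c → Finset (Fin c')) (β : Fin b → Finset (Fin b'))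
    (α : Fin a → Finset (Fin a'))
    (hγ : PartitionTypeG γ) (hβ : PartitionTypeG β) (hα : PartitionTypeG α)
    (hsquare : scomp β (fun i => {u i}) = scomp (fun i' => ({u' i'} : Finset (Fin b'))) α) :
    PartitionTypeG (glueμ u u' γ β) := by
  constructor
  · rintro (x | x) (y | y) hxy <;> simp only [glueμ, Finset.disjoint_left] <;>
      intro z hz hz' <;> simp only [Finset.mem_image, Finset.mem_subtype] at hz hz'
    · obtain ⟨z1, hz1, rfl⟩ := hz
      obtain ⟨z2, hz2, hz12⟩ := hz'
      have : z2 = z1 := by simpa using hz12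
      subst this
      simpa using (hγ.1 x y (by simpa using hxy)).le_bot (Finset.mem_inter.mpr ⟨hz1, hz2⟩)
    · obtain ⟨z1, _, rfl⟩ := hz
      obtain ⟨z2, _, h⟩ := hz'
      simp at h
    · obtain ⟨z1, _, rfl⟩ := hz
      obtain ⟨z2, _, h⟩ := hz'
      simp at h
    · obtain ⟨z1, hz1, rfl⟩ := hz
      obtain ⟨z2, hz2, hz12⟩ := hz'
      have : z2 = z1 := by simpa using hz12
      subst this
      have hxy' : x.1 ≠ y.1 := fun h => hxy (by rw [Subtype.ext h])
      simpa using (hβ.1 x.1 y.1 hxy').le_bot (Finset.mem_inter.mpr ⟨hz1, hz2⟩)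
  · rintro (z | ⟨z, hz⟩)
    · obtain ⟨x, hx⟩ := hγ.2 z
      exact ⟨Sum.inl x, by simp [glueμ, hx]⟩
    · obtain ⟨j, hj⟩ := hβ.2 z
      have hjnot : ¬ ∃ i, u i = j := by
        rintro ⟨i, rfl⟩
        have := congrFun hsquare i
        simp only [scomp, Finset.singleton_biUnion] at this
        rw [this] at hj
        simp only [Finset.mem_biUnion, Finset.mem_singleton] at hj
        obtain ⟨i', _, hi'⟩ := hj
        exact hz ⟨i', hi'.symm⟩
      exact ⟨Sum.inr ⟨j, hjnot⟩, by simp [glueμ, hj, hz]⟩
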